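/- Let k ≥ 1. For every box (i,j) of the double staircase partition ρ̃_{2k} with i odd, j odd, and i ≥ 3, one has wt((i,j),(2,2k)) = 0. -/

import Mathlib

/-- `(i,j)` is a box of the Young diagram of `lam` (parts `lam 1, lam 2, …`, rows indexed
from the top, columns from the left): `1 ≤ i`, `1 ≤ j ≤ lam i`. -/
def inDiagram (lam : ℕ → ℕ) (p : ℕ × ℕ) : Prop :=
  1 ≤ p.1 ∧ 1 ≤ p.2 ∧ p.2 ≤ lam p.1

/-- A step of a lattice path: up `(i,j) → (i-1,j)` or right `(i,j) → (i,j+1)`. -/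
def isStep (p q : ℕ × ℕ) : Prop :=
  (p.1 = q.1 + 1 ∧ p.2 = q.2) ∨ (q.1 = p.1 ∧ q.2 = p.2 + 1)

/-- `P` is a lattice path in `lam` from box `a` to box `b`: a nonempty sequence of boxes of
`lam` starting at `a`, ending at `b`, each step going up or right. -/
def IsLatticePath (lam : ℕ → ℕ) (a b : ℕ × ℕ) (P : List (ℕ × ℕ)) : Prop :=
  P ≠ [] ∧ P.head? = some a ∧ P.getLast? = some b ∧
    (∀ q ∈ P, inDiagram lam q) ∧ List.Chain' isStep P

/-- The signed weight of a path: the product of `(-1)^{i-1}` over all right steps taken from a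
box in row `i` (up steps contribute `1`). -/
def pathWeight : List (ℕ × ℕ) → ℤ
  | [] => 1
  | [_] => 1
  | p :: q :: rest =>
      (if q.1 = p.1 then (-1 : ℤ) ^ (p.1 - 1) else 1) * pathWeight (q :: rest)

/-- `wt(a,b)`: the sum of the signed weights of all lattice paths in `lam` from `a` to `b`. -/
noncomputable def wtSum (lam : ℕ → ℕ) (a b : ℕ × ℕ) : ℤ :=
  ∑ᶠ P ∈ {P : List (ℕ × ℕ) | IsLatticePath lam a b P}, pathWeight P

/-- The double staircase partition `ρ̃_n`: `(n,n,n-2,n-2,…,2,2)` for even `n` and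
`(n,n,n-2,n-2,…,3,3,2)` for odd `n`, as a function sending a row index to its part. -/
def rhoTilde (n i : ℕ) : ℕ :=
  if 1 ≤ i ∧ i ≤ n then (if n % 2 = 1 ∧ i = n then 2 else n - 2 * ((i - 1) / 2)) else 0

/- ### Auxiliary lemmas -/

def Spaths (lam : ℕ → ℕ) (a b : ℕ × ℕ) : Set (List (ℕ × ℕ)) :=
  {P | IsLatticePath lam a b P}

lemma wtSum_def (lam : ℕ → ℕ) (a b : ℕ × ℕ) :
    wtSum lam a b = ∑ᶠ P ∈ Spaths lam a b, pathWeight P := rfl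

lemma isStep_mono {p q : ℕ × ℕ} (h : isStep p q) : q.1 ≤ p.1 ∧ p.2 ≤ q.2 := by
  rcases h with ⟨h1, h2⟩ | ⟨h1, h2⟩ <;> omega

lemma chain_mono : ∀ (P : List (ℕ × ℕ)) (a b : ℕ × ℕ), List.Chain' isStep P →
    P.head? = some a → P.getLast? = some b → b.1 ≤ a.1 ∧ a.2 ≤ b.2
  | [], a, b => by intro _ h; simp at h
  | [p], a, b => by
      intro _ ha hb
      simp only [List.head?_cons, List.getLast?_singleton, Option.some.injEq] at ha hb
      subst ha; subst hb; omega
  | p :: q :: r, a, b => by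
      intro hc ha hb
      rw [show List.Chain' isStep _ ↔ _ from List.isChain_cons_cons] at hc
      have h1 := isStep_mono hc.1
      have h2 := chain_mono (q :: r) q b hc.2 rfl (by rw [← List.getLast?_cons_cons]; exact hb)
      simp only [List.head?_cons, Option.some.injEq] at ha
      subst ha; omega

lemma path_mono {lam : ℕ → ℕ} {a b : ℕ × ℕ} {P : List (ℕ × ℕ)}
    (h : IsLatticePath lam a b P) : b.1 ≤ a.1 ∧ a.2 ≤ b.2 :=
  chain_mono P a b h.2.2.2.2 h.2.1 h.2.2.1

lemma Spaths_empty_of_not_inDiagram {lam : ℕ → ℕ} {a b : ℕ × ℕ} (h : ¬ inDiagram lam a) :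
    Spaths lam a b = ∅ := by
  ext P
  simp only [Spaths, Set.mem_setOf_eq, Set.mem_empty_iff_false, iff_false]
  rintro ⟨hne, hh, hl, hmem, hch⟩
  cases P with
  | nil => exact hne rfl
  | cons p r =>
    simp only [List.head?_cons, Option.some.injEq] at hh
    exact h (hh ▸ hmem p (by simp))

lemma wtSum_zero_of_not_inDiagram {lam : ℕ → ℕ} {a b : ℕ × ℕ} (h : ¬ inDiagram lam a) :
    wtSum lam a b = 0 := by
  rw [wtSum_def, Spaths_empty_of_not_inDiagram h, finsum_mem_empty]

lemma Spaths_empty_of_fst_lt {lam : ℕ → ℕ} {a b : ℕ × ℕ} (h : a.1 < b.1) :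
    Spaths lam a b = ∅ := by
  ext P
  simp only [Spaths, Set.mem_setOf_eq, Set.mem_empty_iff_false, iff_false]
  intro hP
  have := path_mono hP
  omega

lemma wtSum_zero_of_fst_lt {lam : ℕ → ℕ} {a b : ℕ × ℕ} (h : a.1 < b.1) :
    wtSum lam a b = 0 := by
  rw [wtSum_def, Spaths_empty_of_fst_lt h, finsum_mem_empty]

lemma Spaths_empty_of_snd_lt {lam : ℕ → ℕ} {a b : ℕ × ℕ} (h : b.2 < a.2) :
    Spaths lam a b = ∅ := by
  ext P
  simp only [Spaths, Set.mem_setOf_eq, Set.mem_empty_iff_false, iff_false]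
  intro hP
  have := path_mono hP
  omega

lemma Spaths_self {lam : ℕ → ℕ} {b : ℕ × ℕ} (h : inDiagram lam b) :
    Spaths lam b b = {[b]} := by
  ext P
  constructor
  · rintro ⟨hne, hh, hl, hmem, hch⟩
    match P with
    | [] => exact absurd rfl hne
    | [p] =>
      simp only [List.head?_cons, Option.some.injEq] at hh
      simp [hh]
    | p :: q :: r =>
      exfalso
      simp only [List.head?_cons, Option.some.injEq] at hh
      subst hh
      rw [show List.Chain' isStep _ ↔ _ from List.isChain_cons_cons] at hch
      have h1 := isStep_mono hch.1
      have h2 := chain_mono (q :: r) q p hch.2 rfl (by rw [← List.getLast?_cons_cons]; exact hl)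
      rcases hch.1 with ⟨e1, e2⟩ | ⟨e1, e2⟩ <;> omega
  · rintro rfl
    exact ⟨by simp, by simp, by simp, by simpa using h, List.isChain_singleton _⟩

lemma IsLatticePath.cons {lam : ℕ → ℕ} {a q b : ℕ × ℕ} {Q : List (ℕ × ℕ)}
    (hQ : IsLatticePath lam q b Q) (ha : inDiagram lam a) (hs : isStep a q) :
    IsLatticePath lam a b (a :: Q) := by
  obtain ⟨hne, hh, hl, hmem, hch⟩ := hQ
  cases Q with
  | nil => exact absurd rfl hne
  | cons q' r =>
    simp only [List.head?_cons, Option.some.injEq] at hh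
    subst hh
    refine ⟨by simp, rfl, by rw [List.getLast?_cons_cons]; exact hl, ?_, List.isChain_cons_cons.mpr ⟨hs, hch⟩⟩
    intro x hx
    rcases List.mem_cons.mp hx with rfl | hx'
    · exact ha
    · exact hmem x hx'

lemma Spaths_decomp {lam : ℕ → ℕ} {a b : ℕ × ℕ} (ha : inDiagram lam a) (hab : a ≠ b) :
    Spaths lam a b =
      (List.cons a '' Spaths lam (a.1 - 1, a.2) b) ∪ (List.cons a '' Spaths lam (a.1, a.2 + 1) b) := by
  ext P
  constructor
  · rintro ⟨hne, hh, hl, hmem, hch⟩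
    match P with
    | [] => exact absurd rfl hne
    | [p] =>
      exfalso
      simp only [List.head?_cons, Option.some.injEq] at hh
      simp only [List.getLast?_singleton, Option.some.injEq] at hl
      exact hab (hh ▸ hl ▸ rfl)
    | p :: q :: r =>
      simp only [List.head?_cons, Option.some.injEq] at hh
      subst hh
      rw [show List.Chain' isStep _ ↔ _ from List.isChain_cons_cons] at hch
      have htail : IsLatticePath lam q b (q :: r) :=
        ⟨by simp, rfl, by rw [← List.getLast?_cons_cons]; exact hl,
          fun x hx => hmem x (by simp [hx]), hch.2⟩
      rcases hch.1 with ⟨e1, e2⟩ | ⟨e1, e2⟩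
      · left
        have hq : (p.1 - 1, p.2) = q := by
          obtain ⟨q1, q2⟩ := q
          simp only [Prod.mk.injEq]
          simp only at e1 e2
          omega
        exact ⟨q :: r, by rw [hq]; exact htail, rfl⟩
      · right
        have hq : (p.1, p.2 + 1) = q := by
          obtain ⟨q1, q2⟩ := q
          simp only [Prod.mk.injEq]
          simp only at e1 e2
          omega
        exact ⟨q :: r, by rw [hq]; exact htail, rfl⟩
  · rintro (⟨Q, hQ, rfl⟩ | ⟨Q, hQ, rfl⟩)
    · exact hQ.cons ha (Or.inl ⟨by have h1 := ha.1; simp only; omega, rfl⟩)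
    · exact hQ.cons ha (Or.inr ⟨rfl, rfl⟩)

lemma Spaths_finite (lam : ℕ → ℕ) (b : ℕ × ℕ) :
    ∀ (n : ℕ) (a : ℕ × ℕ), a.1 + (b.2 + 1 - a.2) ≤ n → (Spaths lam a b).Finite := by
  intro n
  induction n with
  | zero =>
    intro a h
    have : Spaths lam a b = ∅ := Spaths_empty_of_snd_lt (by omega)
    rw [this]; exact Set.finite_empty
  | succ n ih =>
    intro a h
    by_cases hd : inDiagram lam a
    · by_cases h2 : b.2 < a.2
      · rw [Spaths_empty_of_snd_lt h2]; exact Set.finite_empty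
      · by_cases hab : a = b
        · subst hab; rw [Spaths_self hd]; exact Set.finite_singleton _
        · rw [Spaths_decomp hd hab]
          have h1 : (a.1 - 1) + (b.2 + 1 - a.2) ≤ n := by
            have := hd.1; omega
          have h2' : a.1 + (b.2 + 1 - (a.2 + 1)) ≤ n := by omega
          exact ((ih _ h1).image _).union ((ih _ h2').image _)
    · rw [Spaths_empty_of_not_inDiagram hd]; exact Set.finite_empty

lemma wtSum_self {lam : ℕ → ℕ} {b : ℕ × ℕ} (h : inDiagram lam b) : wtSum lam b b = 1 := by
  rw [wtSum_def, Spaths_self h, finsum_mem_singleton]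
  rfl

lemma wtSum_rec {lam : ℕ → ℕ} {a b : ℕ × ℕ} (ha : inDiagram lam a) (hab : a ≠ b) :
    wtSum lam a b = wtSum lam (a.1 - 1, a.2) b
      + (-1 : ℤ) ^ (a.1 - 1) * wtSum lam (a.1, a.2 + 1) b := by
  have hfin1 : (Spaths lam (a.1 - 1, a.2) b).Finite := Spaths_finite lam b _ _ le_rfl
  have hfin2 : (Spaths lam (a.1, a.2 + 1) b).Finite := Spaths_finite lam b _ _ le_rfl
  have hinj : Function.Injective (List.cons a) := fun x y h => by injection h
  have hdisj : Disjoint (List.cons a '' Spaths lam (a.1 - 1, a.2) b)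
      (List.cons a '' Spaths lam (a.1, a.2 + 1) b) := by
    rw [Set.disjoint_left]
    rintro P ⟨Q, hQ, rfl⟩ ⟨R, hR, hPR⟩
    have hQR : R = Q := hinj hPR
    subst hQR
    have e1 := hQ.2.1
    have e2 := hR.2.1
    rw [e1] at e2
    simp only [Option.some.injEq, Prod.mk.injEq] at e2
    omega
  rw [wtSum_def, Spaths_decomp ha hab,
    finsum_mem_union hdisj (hfin1.image _) (hfin2.image _),
    finsum_mem_image (hinj.injOn), finsum_mem_image (hinj.injOn)]
  congr 1
  · rw [wtSum_def]
    apply finsum_mem_congr rfl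
    intro Q hQ
    obtain ⟨hne, hh, -, -, -⟩ := hQ
    cases Q with
    | nil => exact absurd rfl hne
    | cons q r =>
      simp only [List.head?_cons, Option.some.injEq] at hh
      subst hh
      have h1 := ha.1
      have hcond : ¬(a.1 - 1 = a.1) := by omega
      simp only [pathWeight]
      rw [if_neg hcond, one_mul]
  · have hcongr : ∀ Q ∈ Spaths lam (a.1, a.2 + 1) b,
        pathWeight (a :: Q) = (-1 : ℤ) ^ (a.1 - 1) * pathWeight Q := by
      intro Q hQ
      obtain ⟨hne, hh, -, -, -⟩ := hQ
      cases Q with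
      | nil => exact absurd rfl hne
      | cons q r =>
        simp only [List.head?_cons, Option.some.injEq] at hh
        subst hh
        simp only [pathWeight]
        simp
    rw [finsum_mem_congr rfl hcongr, wtSum_def, ← Set.Finite.coe_toFinset hfin2,
      finsum_mem_coe_finset, finsum_mem_coe_finset, Finset.mul_sum]

lemma rho_eq (k i : ℕ) (h1 : 1 ≤ i) (h2 : i ≤ 2 * k) :
    rhoTilde (2 * k) i = 2 * k - 2 * ((i - 1) / 2) := by
  unfold rhoTilde
  rw [if_pos ⟨h1, h2⟩, if_neg (by omega)]

lemma rho_zero (k i : ℕ) (h : 2 * k < i) : rhoTilde (2 * k) i = 0 := by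
  unfold rhoTilde
  rw [if_neg (by omega)]


/-- For `k ≥ 1` and every box `(i,j)` of the double staircase partition
`ρ̃_{2k}` with `i` odd, `j` odd and `i ≥ 3`, `wt((i,j),(2,2k)) = 0`. -/
theorem stmt11 (k : ℕ) (hk : 1 ≤ k) (i j : ℕ)
    (hbox : inDiagram (rhoTilde (2 * k)) (i, j)) (hi : i % 2 = 1) (hj : j % 2 = 1)
    (hi3 : 3 ≤ i) :
    wtSum (rhoTilde (2 * k)) (i, j) (2, 2 * k) = 0 := by
  suffices H : ∀ m : ℕ, ∀ j : ℕ, j % 2 = 1 →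
      wtSum (rhoTilde (2 * k)) (2 * m + 1, j) (2, 2 * k) = 0 by
    have him : 2 * ((i - 1) / 2) + 1 = i := by omega
    have := H ((i - 1) / 2) j hj
    rw [him] at this
    exact this
  intro m
  induction m with
  | zero =>
    intro j hj
    exact wtSum_zero_of_fst_lt (by norm_num)
  | succ m ih =>
    have Hin : ∀ d j2 : ℕ, j2 % 2 = 1 → rhoTilde (2 * k) (2 * m + 3) < j2 + d →
        wtSum (rhoTilde (2 * k)) (2 * m + 3, j2) (2, 2 * k) = 0 := by
      intro d
      induction d with
      | zero =>
        intro j2 hj2 hlt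
        exact wtSum_zero_of_not_inDiagram (fun hin =>
          absurd hin.2.2 (show ¬(j2 ≤ rhoTilde (2 * k) (2 * m + 3)) by omega))
      | succ d ihd =>
        intro j2 hj2 hlt
        by_cases hjL : rhoTilde (2 * k) (2 * m + 3) < j2
        · exact wtSum_zero_of_not_inDiagram (fun hin =>
            absurd hin.2.2 (show ¬(j2 ≤ rhoTilde (2 * k) (2 * m + 3)) by omega))
        · push_neg at hjL
          have hr : 2 * m + 3 ≤ 2 * k := by
            by_contra hcon
            have := rho_zero k (2 * m + 3) (by omega)
            omega
          have hL : rhoTilde (2 * k) (2 * m + 3) = 2 * k - (2 * m + 2) := by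
            rw [rho_eq k _ (by omega) hr]; omega
          have hL2 : rhoTilde (2 * k) (2 * m + 2) = 2 * k - (2 * m) := by
            rw [rho_eq k _ (by omega) (by omega)]; omega
          have hL1 : rhoTilde (2 * k) (2 * m + 1) = 2 * k - (2 * m) := by
            rw [rho_eq k _ (by omega) (by omega)]; omega
          -- j2 + 1 ≤ row length for row 2m+3
          have hj1L : j2 + 1 ≤ rhoTilde (2 * k) (2 * m + 3) := by omega
          -- recurrence at (2m+3, j2)
          have h1 := wtSum_rec (lam := rhoTilde (2 * k)) (a := (2 * m + 3, j2))
            (b := (2, 2 * k)) ⟨by omega, by omega, show j2 ≤ rhoTilde (2 * k) (2 * m + 3) by omega⟩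
            (fun hcon => absurd (show (2 * m + 3 : ℕ) = 2 from congrArg Prod.fst hcon) (by omega))
          -- recurrence at (2m+3, j2+1)
          have h2 := wtSum_rec (lam := rhoTilde (2 * k)) (a := (2 * m + 3, j2 + 1))
            (b := (2, 2 * k)) ⟨by omega, by omega, show j2 + 1 ≤ rhoTilde (2 * k) (2 * m + 3) by omega⟩
            (fun hcon => absurd (show (2 * m + 3 : ℕ) = 2 from congrArg Prod.fst hcon) (by omega))
          -- recurrence at (2m+2, j2)
          have h3 := wtSum_rec (lam := rhoTilde (2 * k)) (a := (2 * m + 2, j2))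
            (b := (2, 2 * k)) ⟨by omega, by omega, show j2 ≤ rhoTilde (2 * k) (2 * m + 2) by omega⟩
            (fun hcon => absurd (show (j2 : ℕ) = 2 * k from congrArg Prod.snd hcon) (by omega))
          simp only at h1 h2 h3
          rw [show 2 * m + 3 - 1 = 2 * m + 2 from by omega] at h1 h2
          rw [show 2 * m + 2 - 1 = 2 * m + 1 from by omega] at h3
          rw [Even.neg_one_pow ⟨m + 1, by ring⟩] at h1 h2
          rw [Odd.neg_one_pow ⟨m, by ring⟩] at h3
          have h4 : wtSum (rhoTilde (2 * k)) (2 * m + 1, j2) (2, 2 * k) = 0 := ih j2 hj2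
          have h5 : wtSum (rhoTilde (2 * k)) (2 * m + 3, j2 + 1 + 1) (2, 2 * k) = 0 :=
            ihd (j2 + 2) (by omega) (by omega)
          rw [h5] at h2
          rw [h4] at h3
          rw [h3, h2] at h1
          rw [h1]
          ring
    intro j hj
    rw [show 2 * (m + 1) + 1 = 2 * m + 3 from by ring]
    exact Hin (rhoTilde (2 * k) (2 * m + 3) + 1) j hj (by omega)
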